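/- Every locally nilpotent derivation of K[x,y] has zero divergence: if D = f·∂/∂x + g·∂/∂y is locally nilpotent, then ∂f/∂x + ∂g/∂y = 0. -/

import Mathlib

open MvPolynomial Finset Nat

section LndAux

variable {K : Type*} [Field K] [CharZero K]

theorem pderiv_comm' (i j : Fin 2) (f : MvPolynomial (Fin 2) K) :
    pderiv i (pderiv j f) = pderiv j (pderiv i f) := by
  classical
  induction f using MvPolynomial.induction_on' with
  | monomial s a =>
      rcases eq_or_ne i j with rfl | hij
      · rfl
      · simp only [pderiv_monomial]
        rw [tsub_right_comm]
        congr 1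
        have h1 : ((s - Finsupp.single j 1 : _ →₀ ℕ)) i = s i := by
          rw [Finsupp.tsub_apply]; simp [Finsupp.single_apply, hij.symm]
        have h2 : ((s - Finsupp.single i 1 : _ →₀ ℕ)) j = s j := by
          rw [Finsupp.tsub_apply]; simp [Finsupp.single_apply, hij]
        rw [h1, h2]; ring
  | add p q hp hq => simp [hp, hq]

variable (D : Derivation K (MvPolynomial (Fin 2) K) (MvPolynomial (Fin 2) K))

theorem rep (h : MvPolynomial (Fin 2) K) :
    D h = D (X 0) * pderiv 0 h + D (X 1) * pderiv 1 h := by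
  have : D = (D (X 0)) • (pderiv 0 : Derivation K (MvPolynomial (Fin 2) K) (MvPolynomial (Fin 2) K)) + (D (X 1)) • pderiv 1 := by
    apply derivation_ext
    intro i
    fin_cases i <;> simp
  conv_lhs => rw [this]
  simp [smul_eq_mul]

/-- The Jacobian `∂₀f ∂₁g - ∂₁f ∂₀g`. -/
noncomputable def Jc (f g : MvPolynomial (Fin 2) K) : MvPolynomial (Fin 2) K :=
  pderiv 0 f * pderiv 1 g - pderiv 1 f * pderiv 0 g

theorem keyid (f g : MvPolynomial (Fin 2) K) :
    D (Jc f g) + (pderiv 0 (D (X 0)) + pderiv 1 (D (X 1))) * Jc f g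
      = Jc (D f) g + Jc f (D g) := by
  unfold Jc
  rw [rep D (pderiv 0 f * pderiv 1 g - pderiv 1 f * pderiv 0 g), rep D f, rep D g]
  simp only [map_sub, map_add, pderiv_mul]
  rw [pderiv_comm' 1 0 f, pderiv_comm' 1 0 g]
  ring

theorem iterLeibniz (n : ℕ) (a b : MvPolynomial (Fin 2) K) :
    (fun x => D x)^[n] (a * b) = ∑ ij ∈ antidiagonal n,
      choose n ij.1 • ((fun x => D x)^[ij.1] a * (fun x => D x)^[ij.2] b) := by
  induction n with
  | zero => simp
  | succ n ih =>
    rw [sum_antidiagonal_choose_succ_nsmul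
      (M := MvPolynomial (Fin 2) K) (fun i j => (fun x => D x)^[i] a * (fun x => D x)^[j] b) n]
    simp only [Function.iterate_succ_apply', ih, map_sum, map_nsmul, Derivation.leibniz,
      smul_eq_mul, smul_add, sum_add_distrib]
    congr 1
    refine sum_congr rfl fun ⟨i, j⟩ hij ↦ ?_
    rw [n.choose_symm_of_eq_add (mem_antidiagonal.1 hij).symm, mul_comm]

theorem iterLeibniz' (n : ℕ) (a b : MvPolynomial (Fin 2) K) :
    (fun x => D x)^[n] (a * b) = ∑ i ∈ range (n + 1),
      n.choose i • ((fun x => D x)^[i] a * (fun x => D x)^[n - i] b) := by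
  rw [iterLeibniz D n a b]
  exact sum_antidiagonal_eq_sum_range_succ
    (fun i j ↦ n.choose i • ((fun x => D x)^[i] a * (fun x => D x)^[j] b)) n

theorem iter_add (n : ℕ) (x y : MvPolynomial (Fin 2) K) :
    (fun x => D x)^[n] (x + y) = (fun x => D x)^[n] x + (fun x => D x)^[n] y := by
  induction n with
  | zero => rfl
  | succ n ih => simp only [Function.iterate_succ_apply', ih, map_add]

theorem iter_stable {m n : ℕ} (hmn : m ≤ n) {h : MvPolynomial (Fin 2) K}
    (hm : (fun x => D x)^[m] h = 0) : (fun x => D x)^[n] h = 0 := by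
  obtain ⟨k, rfl⟩ := Nat.exists_eq_add_of_le hmn
  rw [add_comm, Function.iterate_add_apply, hm]
  exact Function.iterate_fixed (by simp) k

variable (hln : ∀ h : MvPolynomial (Fin 2) K, ∃ n : ℕ, (fun x => D x)^[n] h = 0)

/-- `ν h`: the nilpotency index. -/
noncomputable def nu (h : MvPolynomial (Fin 2) K) : ℕ :=
  sInf {n | (fun x => D x)^[n] h = 0}

include hln

theorem nu_spec (h : MvPolynomial (Fin 2) K) : (fun x => D x)^[nu D h] h = 0 :=
  Nat.sInf_mem (hln h)

theorem iter_nu_le {m : ℕ} {h : MvPolynomial (Fin 2) K} (hm : nu D h ≤ m) :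
    (fun x => D x)^[m] h = 0 :=
  iter_stable D hm (nu_spec D hln h)

theorem iter_lt_nu {m : ℕ} {h : MvPolynomial (Fin 2) K} (hm : m < nu D h) :
    (fun x => D x)^[m] h ≠ 0 := fun hx => Nat.notMem_of_lt_sInf hm hx

theorem nu_zero : nu D 0 = 0 :=
  Nat.sInf_eq_zero.2 (Or.inl (by simp))

theorem nu_pos {h : MvPolynomial (Fin 2) K} (hh : h ≠ 0) : 1 ≤ nu D h := by
  rcases Nat.eq_zero_or_pos (nu D h) with h0 | h1
  · exact absurd (by simpa [h0] using nu_spec D hln h) hh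
  · exact h1

theorem nu_eq {m : ℕ} {h : MvPolynomial (Fin 2) K} (h1 : (fun x => D x)^[m] h ≠ 0)
    (h2 : (fun x => D x)^[m + 1] h = 0) : nu D h = m + 1 := by
  have hle : nu D h ≤ m + 1 :=
    Nat.sInf_le (show m + 1 ∈ {n | (fun x => D x)^[n] h = 0} from h2)
  have hgt : m < nu D h := by
    by_contra hc
    exact h1 (iter_nu_le D hln (by omega))
  omega

theorem nu_mul {h k : MvPolynomial (Fin 2) K} (hh : h ≠ 0) (hk : k ≠ 0) :
    nu D (h * k) + 1 = nu D h + nu D k := by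
  obtain ⟨p, hp⟩ : ∃ p, nu D h = p + 1 :=
    ⟨nu D h - 1, by have := nu_pos D hln hh; omega⟩
  obtain ⟨q, hq⟩ : ∃ q, nu D k = q + 1 :=
    ⟨nu D k - 1, by have := nu_pos D hln hk; omega⟩
  have key : nu D (h * k) = (p + q) + 1 := by
    apply nu_eq D hln
    · rw [iterLeibniz']
      rw [Finset.sum_eq_single p]
      · have h1 : (fun x => D x)^[p] h ≠ 0 := iter_lt_nu D hln (by omega)
        have h2 : (fun x => D x)^[p + q - p] k ≠ 0 := by
          simpa using iter_lt_nu D hln (m := q) (by omega)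
        have := mul_ne_zero h1 h2
        rw [nsmul_eq_mul]
        exact mul_ne_zero
          (Nat.cast_ne_zero.2 (Nat.choose_pos (show p ≤ p + q by omega)).ne') this
      · intro i hi hne
        rcases lt_or_gt_of_ne hne with hlt | hgt
        · have : (fun x => D x)^[p + q - i] k = 0 := iter_nu_le D hln (m := p + q - i) (by omega)
          rw [this, mul_zero, smul_zero]
        · have : (fun x => D x)^[i] h = 0 := iter_nu_le D hln (m := i) (by omega)
          rw [this, zero_mul, smul_zero]
      · intro hp'
        simp at hp'
    · rw [iterLeibniz']
      apply Finset.sum_eq_zero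
      intro i hi
      rcases le_or_gt (p + 1) i with hle | hlt
      · rw [iter_nu_le D hln (m := i) (by omega), zero_mul, smul_zero]
      · rw [iter_nu_le D hln (m := p + q + 1 - i) (by omega), mul_zero, smul_zero]
  omega

theorem nu_D_lt {h : MvPolynomial (Fin 2) K} (hh : h ≠ 0) : nu D (D h) < nu D h := by
  obtain ⟨p, hp⟩ : ∃ p, nu D h = p + 1 :=
    ⟨nu D h - 1, by have := nu_pos D hln hh; omega⟩
  have h0 : (fun x => D x)^[p + 1] h = 0 := by rw [← hp]; exact nu_spec D hln h
  have h1 : (fun x => D x)^[p] (D h) = 0 := by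
    rw [← Function.iterate_succ_apply]; exact h0
  have h2 : nu D (D h) ≤ p := Nat.sInf_le h1
  omega

theorem nu_add_eq {x y : MvPolynomial (Fin 2) K} (hxy : nu D y < nu D x) :
    nu D (y + x) = nu D x := by
  obtain ⟨p, hp⟩ : ∃ p, nu D x = p + 1 := ⟨nu D x - 1, by omega⟩
  rw [hp]
  apply nu_eq D hln
  · rw [iter_add, iter_nu_le D hln (m := p) (h := y) (by omega), zero_add]
    exact iter_lt_nu D hln (by omega)
  · rw [iter_add, iter_nu_le D hln (m := p + 1) (h := y) (by omega),
      iter_nu_le D hln (m := p + 1) (h := x) (by omega), zero_add]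

end LndAux

section Main

variable {K : Type*} [Field K] [CharZero K]
variable (D : Derivation K (MvPolynomial (Fin 2) K) (MvPolynomial (Fin 2) K))

/-- The sequence of Jacobian sums. -/
noncomputable def wseq (n : ℕ) : MvPolynomial (Fin 2) K :=
  ∑ i ∈ range (n + 1), n.choose i •
    Jc ((fun x => D x)^[i] (X 0)) ((fun x => D x)^[n - i] (X 1))

theorem wseq_zero : wseq D 0 = 1 := by
  simp only [wseq, range_one, sum_singleton, choose_self, one_smul,
    Function.iterate_zero, id_eq, Nat.sub_zero]
  simp [Jc]

theorem wseq_rec (n : ℕ) :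
    wseq D (n + 1) = D (wseq D n)
      + (pderiv 0 (D (X 0)) + pderiv 1 (D (X 1))) * wseq D n := by
  have expand : D (wseq D n) + (pderiv 0 (D (X 0)) + pderiv 1 (D (X 1))) * wseq D n
      = ∑ i ∈ range (n + 1), n.choose i •
          (Jc ((fun x => D x)^[i + 1] (X 0)) ((fun x => D x)^[n - i] (X 1))
           + Jc ((fun x => D x)^[i] (X 0)) ((fun x => D x)^[n - i + 1] (X 1))) := by
    simp only [wseq, map_sum, map_nsmul, Finset.mul_sum, ← Finset.sum_add_distrib]
    refine Finset.sum_congr rfl fun i hi => ?_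
    rw [mul_smul_comm, ← smul_add, keyid, Function.iterate_succ_apply',
      Function.iterate_succ_apply']
  rw [expand]
  have lhs : wseq D (n + 1) = ∑ i ∈ range (n + 2), (n + 1).choose i •
      Jc ((fun x => D x)^[i] (X 0)) ((fun x => D x)^[n + 1 - i] (X 1)) := rfl
  rw [lhs, sum_choose_succ_nsmul
    (fun i j => Jc ((fun x => D x)^[i] (X 0)) ((fun x => D x)^[j] (X 1))) n]
  simp only [smul_add, Finset.sum_add_distrib]
  rw [add_comm]
  congr 1
  refine Finset.sum_congr rfl fun i hi => ?_
  rw [Nat.succ_sub (Nat.lt_succ_iff.1 (mem_range.1 hi))]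

variable (hln : ∀ h : MvPolynomial (Fin 2) K, ∃ n : ℕ, (fun x => D x)^[n] h = 0)

include hln

theorem wseq_vanish : wseq D (nu D (X 0) + nu D (X 1)) = 0 := by
  apply Finset.sum_eq_zero
  intro i hi
  rcases le_or_gt (nu D (X 0)) i with hle | hlt
  · rw [iter_nu_le D hln (m := i) hle]
    simp [Jc]
  · rw [iter_nu_le D hln (m := nu D (X 0) + nu D (X 1) - i) (by omega)]
    simp [Jc]

theorem nu_one : nu D 1 = 1 := by
  apply nu_eq D hln
  · exact one_ne_zero
  · show D 1 = 0
    exact D.map_one_eq_zero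

theorem nu_wseq (hc : pderiv 0 (D (X 0)) + pderiv 1 (D (X 1)) ≠ 0) (n : ℕ) :
    nu D (wseq D n) = n * (nu D (pderiv 0 (D (X 0)) + pderiv 1 (D (X 1))) - 1) + 1 := by
  set c := pderiv 0 (D (X 0)) + pderiv 1 (D (X 1)) with hcdef
  obtain ⟨d, hd⟩ : ∃ d, nu D c = d + 1 := ⟨nu D c - 1, by have := nu_pos D hln hc; omega⟩
  rw [hd]
  simp only [Nat.add_sub_cancel]
  induction n with
  | zero => simpa [wseq_zero] using nu_one D hln
  | succ n ih =>
    have hwn : wseq D n ≠ 0 := by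
      intro h0
      rw [h0, nu_zero D hln] at ih
      omega
    have hmul : nu D (c * wseq D n) + 1 = nu D c + nu D (wseq D n) := nu_mul D hln hc hwn
    have hDlt : nu D (D (wseq D n)) < nu D (wseq D n) := nu_D_lt D hln hwn
    rw [wseq_rec, ← hcdef, nu_add_eq D hln (by omega)]
    rw [Nat.succ_mul]
    omega

end Main

/-- Every locally nilpotent derivation `D = f∂/∂x + g∂/∂y` of `K[x,y]` has zero divergence:
`f_x + g_y = 0`, where `f = D x` and `g = D y`. -/
theorem lnd_divergence_zero
    (K : Type*) [Field K] [CharZero K]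
    (D : Derivation K (MvPolynomial (Fin 2) K) (MvPolynomial (Fin 2) K))
    (hln : ∀ h : MvPolynomial (Fin 2) K, ∃ n : ℕ, (fun x => D x)^[n] h = 0) :
    pderiv 0 (D (X 0)) + pderiv 1 (D (X 1)) = 0 := by
  by_contra hc
  have h1 := nu_wseq D hln hc (nu D (X 0) + nu D (X 1))
  rw [wseq_vanish D hln, nu_zero D hln] at h1
  omega
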